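/- Let Λ''_ℚ be a nondegenerate rational quadratic space of signature (1, m) with m ≥ 2 containing at least one isotropic line. Then Λ''_ℚ contains infinitely many isotropic lines; in particular, given an isotropic line I ⊆ Λ''_ℚ, there exist isotropic lines I₃, I₄ ⊆ Λ''_ℚ such that I, I₃, I₄ are linearly independent. -/

import Mathlib

/-- A nondegenerate rational quadratic space of signature `(1, m)`, `m ≥ 2`, containing
an isotropic line contains infinitely many isotropic lines; in particular, given an
isotropic line `ℚx` there are isotropic lines `ℚx₃, ℚx₄` with `x, x₃, x₄` linearly
independent. -/
theorem stmt_10 {V : Type*} [AddCommGroup V] [Module ℚ V]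
    (m : ℕ) (hm : 2 ≤ m) (B : LinearMap.BilinForm ℚ V) (hsymm : ∀ x y, B x y = B y x)
    (b : Module.Basis (Fin (1 + m)) ℚ V)
    (horth : ∀ i j, i ≠ j → B (b i) (b j) = 0)
    (hsig : ∀ i : Fin (1 + m), if (i : ℕ) < 1 then 0 < B (b i) (b i) else B (b i) (b i) < 0)
    (x : V) (hx : x ≠ 0) (hiso : B x x = 0) :
    {I : Submodule ℚ V | ∃ v : V, v ≠ 0 ∧ B v v = 0 ∧ I = Submodule.span ℚ {v}}.Infinite ∧
    ∃ x₃ x₄ : V, B x₃ x₃ = 0 ∧ B x₄ x₄ = 0 ∧ LinearIndependent ℚ ![x, x₃, x₄] := by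
  classical
  set c : Fin (1 + m) → ℚ := fun i => b.repr x i with hc
  set a : Fin (1 + m) → ℚ := fun i => B (b i) (b i) with ha
  have hx' : x = ∑ i, c i • b i := (b.sum_repr x).symm
  have hBxb : ∀ j, B x (b j) = c j * a j := by
    intro j
    calc B x (b j) = ∑ i, c i * B (b i) (b j) := by
          conv_lhs => rw [hx']
          rw [map_sum, LinearMap.sum_apply]
          simp [smul_eq_mul]
      _ = c j * a j := by
          rw [Finset.sum_eq_single j]
          · intro i _ hij
            rw [horth i j hij, mul_zero]
          · intro h; exact absurd (Finset.mem_univ j) h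
  -- there is an index j ≥ 1 with c j ≠ 0
  obtain ⟨j, hj1, hjc⟩ : ∃ j : Fin (1 + m), 1 ≤ (j : ℕ) ∧ c j ≠ 0 := by
    by_contra h
    push_neg at h
    set z0 : Fin (1 + m) := ⟨0, by omega⟩ with hz0
    have hxz : x = c z0 • b z0 := by
      rw [hx', Finset.sum_eq_single z0]
      · intro i _ hiz
        have hi1 : 1 ≤ (i : ℕ) := by
          rcases Nat.eq_zero_or_pos (i : ℕ) with h0 | h0
          · exact absurd (Fin.ext h0) hiz
          · omega
        rw [h i hi1, zero_smul]
      · intro h'; exact absurd (Finset.mem_univ z0) h'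
    have hc0 : c z0 ≠ 0 := by
      intro h0
      rw [h0, zero_smul] at hxz
      exact hx hxz
    have ha0 : 0 < a z0 := by
      have := hsig z0
      rwa [if_pos (by simp [hz0])] at this
    have hxx : B x x = c z0 * c z0 * a z0 := by
      conv_lhs => rw [hxz]
      simp only [map_smul, LinearMap.smul_apply, smul_eq_mul, ← ha]
      ring
    rw [hiso] at hxx
    nlinarith [mul_self_pos.mpr hc0]
  have haj : a j < 0 := by
    have := hsig j
    rwa [if_neg (by omega)] at this
  -- pick k ≥ 1, k ≠ j
  set i1 : Fin (1 + m) := ⟨1, by omega⟩ with hi1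
  set i2 : Fin (1 + m) := ⟨2, by omega⟩ with hi2
  set k : Fin (1 + m) := if j = i1 then i2 else i1 with hk
  have hk1 : 1 ≤ (k : ℕ) := by
    rw [hk]; split <;> simp [hi1, hi2]
  have hkj : k ≠ j := by
    rw [hk]; split
    · rename_i heq; rw [heq]; intro h; simp [hi1, hi2, Fin.ext_iff] at h
    · rename_i hne; exact fun h => hne h.symm
  have hak : a k < 0 := by
    have := hsig k
    rwa [if_neg (by omega)] at this
  -- the auxiliary vector z : orthogonal to x, negative norm
  set z : V := (c k * a k) • b j - (c j * a j) • b k with hzdef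
  have hBbz : B x z = 0 := by
    rw [hzdef, map_sub, map_smul, map_smul, hBxb, hBxb]
    simp [smul_eq_mul]; ring
  have hBzb : B z x = 0 := by rw [hsymm]; exact hBbz
  have hBzz : B z z = (c k * a k) ^ 2 * a j + (c j * a j) ^ 2 * a k := by
    rw [hzdef]
    simp only [map_sub, map_smul, LinearMap.sub_apply, LinearMap.smul_apply, smul_eq_mul, ← ha]
    rw [horth j k (Ne.symm hkj), horth k j hkj]
    ring
  set d : ℚ := B z z with hd
  have hsub : ∀ (p y w : V) (s : ℚ), B p (y - s • w) = B p y - s * B p w := by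
    intro p y w s; simp
  have hdneg : d < 0 := by
    have h1 : (c k * a k) ^ 2 * a j ≤ 0 :=
      mul_nonpos_of_nonneg_of_nonpos (sq_nonneg _) haj.le
    have h2 : (c j * a j) ^ 2 * a k < 0 := by
      apply mul_neg_of_pos_of_neg _ hak
      exact pow_two_pos_of_ne_zero (mul_ne_zero hjc (ne_of_lt haj))
    linarith [hBzz]
  have hdne : d ≠ 0 := ne_of_lt hdneg
  -- u₀ with B x u₀ = 1
  have hcaj : c j * a j ≠ 0 := mul_ne_zero hjc (ne_of_lt haj)
  set u₀ : V := (c j * a j)⁻¹ • b j with hu₀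
  have hBxu₀ : B x u₀ = 1 := by
    rw [hu₀, map_smul, smul_eq_mul, hBxb]
    field_simp [ne_of_lt haj]
  -- u₁ : B x u₁ = 1, B z u₁ = 0
  set u₁ : V := u₀ - (B z u₀ / d) • z with hu₁
  have hBxu₁ : B x u₁ = 1 := by
    rw [hu₁, hsub, hBbz, hBxu₀]
    ring
  have hBzu₁ : B z u₁ = 0 := by
    rw [hu₁, hsub, ← hd]
    field_simp
    simp
  -- u' : isotropic, B x u' = 1, B z u' = 0
  set u' : V := u₁ - (B u₁ u₁ / 2) • x with hu'
  have hBxu' : B x u' = 1 := by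
    rw [hu', hsub, hiso, hBxu₁]
    ring
  have hBu'x : B u' x = 1 := by rw [hsymm]; exact hBxu'
  have hBzu' : B z u' = 0 := by
    rw [hu', hsub, hBzb, hBzu₁]
    ring
  have hBu'z : B u' z = 0 := by rw [hsymm]; exact hBzu'
  have hBu₁x : B u₁ x = 1 := by rw [hsymm]; exact hBxu₁
  have hBu₁u' : B u₁ u' = B u₁ u₁ / 2 := by
    have h := (congrArg (B u₁) hu').trans (hsub u₁ u₁ x (B u₁ u₁ / 2))
    rw [hBu₁x] at h
    rw [h]; ring
  have hsubl : ∀ (p y w : V) (s : ℚ), B (y - s • w) p = B y p - s * B w p := by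
    intro p y w s; simp
  have hBu'u' : B u' u' = 0 := by
    have e0 : B u' u' = B u' u₁ - (B u₁ u₁ / 2) * B u' x :=
      (congrArg (B u') hu').trans (hsub u' u₁ x (B u₁ u₁ / 2))
    rw [e0, hsymm u' u₁, hBu₁u', hBu'x]
    ring
  -- the family of isotropic vectors
  set v : ℚ → V := fun t => x + t • z + (t ^ 2 * (-d) / 2) • u' with hv
  have hvt : ∀ t, v t = x + t • z + (t ^ 2 * (-d) / 2) • u' := fun t => rfl
  have hadd : ∀ (p y w q : V) (s r : ℚ), B p (y + s • w + r • q)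
      = B p y + s * B p w + r * B p q := by
    intro p y w q s r; simp
  have haddl : ∀ (p y w q : V) (s r : ℚ), B (y + s • w + r • q) p
      = B y p + s * B w p + r * B q p := by
    intro p y w q s r; simp
  have hBu'v : ∀ t, B u' (v t) = 1 := by
    intro t
    rw [hvt, hadd, hBu'x, hBu'z, hBu'u']
    ring
  have hBzv : ∀ t, B z (v t) = t * d := by
    intro t
    rw [hvt, hadd, hBzb, hBzu', ← hd]
    ring
  have hBxv : ∀ t, B x (v t) = t ^ 2 * (-d) / 2 := by
    intro t
    rw [hvt, hadd, hiso, hBbz, hBxu']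
    ring
  have hBvv : ∀ t, B (v t) (v t) = 0 := by
    intro t
    conv_lhs => rw [hvt, haddl, hadd, hadd, hadd,
      hiso, hBbz, hBzb, hBxu', hBu'x, hBzu', hBu'z, hBu'u']
    rw [← hd]
    ring
  have hvne : ∀ t, v t ≠ 0 := by
    intro t h
    have := hBu'v t
    rw [h, map_zero] at this
    exact one_ne_zero this.symm
  constructor
  · -- infinitely many isotropic lines
    apply Set.infinite_of_injective_forall_mem
      (f := fun t : ℚ => Submodule.span ℚ {v t})
    · intro t s hts
      dsimp only at hts
      have hmem : v t ∈ Submodule.span ℚ ({v s} : Set V) := by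
        rw [← hts]; exact Submodule.mem_span_singleton_self _
      obtain ⟨μ, hμ⟩ := Submodule.mem_span_singleton.mp hmem
      have h1 : μ = 1 := by
        have := congrArg (B u') hμ
        rwa [map_smul, smul_eq_mul, hBu'v, hBu'v, mul_one] at this
      rw [h1, one_smul] at hμ
      have := congrArg (B z) hμ
      rw [hBzv, hBzv] at this
      exact (mul_right_cancel₀ hdne this).symm
    · intro t
      exact ⟨v t, hvne t, hBvv t, rfl⟩
  · -- three linearly independent isotropic vectors
    refine ⟨u', v 1, hBu'u', hBvv 1, ?_⟩
    rw [Fintype.linearIndependent_iff]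
    intro g hg
    rw [Fin.sum_univ_three] at hg
    simp only [Matrix.cons_val_zero, Matrix.cons_val_one, Matrix.head_cons,
      Matrix.cons_val_two, Matrix.tail_cons] at hg
    have h2 : g 2 = 0 := by
      have := congrArg (B z) hg
      simp only [map_add, map_smul, smul_eq_mul, hBzb, hBzu', hBzv, map_zero] at this
      have : g 2 * (1 * d) = 0 := by linarith
      rcases mul_eq_zero.mp this with h | h
      · exact h
      · exact absurd (by linarith : d = 0) hdne
    have h0 : g 0 = 0 := by
      have := congrArg (B u') hg
      simp only [map_add, map_smul, smul_eq_mul, hBu'x, hBu'u', hBu'v, map_zero] at this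
      rw [h2] at this; linarith
    have h1 : g 1 = 0 := by
      have := congrArg (B x) hg
      simp only [map_add, map_smul, smul_eq_mul, hiso, hBxu', hBxv, map_zero] at this
      rw [h2, h0] at this; linarith
    intro i
    fin_cases i <;> assumption
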